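/- (Second partial derivative identity for the self-duality function, one site) Let $\varrho \in [-1,1]$ and fix reals $y_1, y_2 \ge 0$. Define $F : \mathbb{R}^2 \to \mathbb{C}$ by $F(x_1,x_2) = \exp\big(-\sqrt{1-\varrho}(x_1+x_2)(y_1+y_2) + i\sqrt{1+\varrho}(x_1-x_2)(y_1-y_2)\big)$. Then $\frac{1}{2}\partial_{x_1}^2 F + \frac{1}{2}\partial_{x_2}^2 F + \varrho\, \partial_{x_1}\partial_{x_2} F = 4(1-\varrho^2)\, y_1 y_2\, F$. -/

import Mathlib

open Real

/-- The one-site self-duality function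
`F(x₁,x₂) = exp(-√(1-ρ)(x₁+x₂)(y₁+y₂) + i√(1+ρ)(x₁-x₂)(y₁-y₂))`. -/
noncomputable def selfDualF (ρ y1 y2 : ℝ) (x1 x2 : ℝ) : ℂ :=
  Complex.exp (-(Real.sqrt (1 - ρ) : ℂ) * ((x1 : ℂ) + (x2 : ℂ)) * ((y1 : ℂ) + (y2 : ℂ))
    + Complex.I * (Real.sqrt (1 + ρ) : ℂ) * ((x1 : ℂ) - (x2 : ℂ)) * ((y1 : ℂ) - (y2 : ℂ)))

lemma expLin_hasDerivAt (a b : ℂ) (t : ℝ) :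
    HasDerivAt (fun s : ℝ => Complex.exp (a * s + b)) (a * Complex.exp (a * t + b)) t := by
  have h0 : HasDerivAt (fun s : ℝ => (s : ℂ)) 1 t := by
    simpa using (hasDerivAt_id t).ofReal_comp
  have h1 : HasDerivAt (fun s : ℝ => a * (s : ℂ) + b) a t := by
    simpa using (h0.const_mul a).add_const b
  simpa [mul_comm] using h1.cexp

lemma expLin_deriv (a b : ℂ) (t : ℝ) :
    deriv (fun s : ℝ => Complex.exp (a * s + b)) t = a * Complex.exp (a * t + b) :=
  (expLin_hasDerivAt a b t).deriv

theorem stmt12 (ρ y1 y2 : ℝ) (hρ : ρ ∈ Set.Icc (-1 : ℝ) 1) (hy1 : 0 ≤ y1) (hy2 : 0 ≤ y2)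
    (x1 x2 : ℝ) :
    (1 / 2 : ℂ) * deriv (fun t => deriv (fun s => selfDualF ρ y1 y2 s x2) t) x1
    + (1 / 2 : ℂ) * deriv (fun t => deriv (fun s => selfDualF ρ y1 y2 x1 s) t) x2
    + (ρ : ℂ) * deriv (fun t => deriv (fun s => selfDualF ρ y1 y2 s t) x1) x2
    = 4 * (1 - (ρ : ℂ) ^ 2) * (y1 : ℂ) * (y2 : ℂ) * selfDualF ρ y1 y2 x1 x2 := by
  set A : ℂ := -(Real.sqrt (1 - ρ) : ℂ) * ((y1 : ℂ) + y2)
      + Complex.I * (Real.sqrt (1 + ρ) : ℂ) * ((y1 : ℂ) - y2) with hA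
  set B : ℂ := -(Real.sqrt (1 - ρ) : ℂ) * ((y1 : ℂ) + y2)
      - Complex.I * (Real.sqrt (1 + ρ) : ℂ) * ((y1 : ℂ) - y2) with hB
  have hF : ∀ u v : ℝ, selfDualF ρ y1 y2 u v = Complex.exp (A * u + B * v) := by
    intro u v
    unfold selfDualF
    congr 1
    rw [hA, hB]; ring
  have hd1 : deriv (fun t => deriv (fun s => selfDualF ρ y1 y2 s x2) t) x1
      = A * A * Complex.exp (A * x1 + B * x2) := by
    have : (fun t : ℝ => deriv (fun s => selfDualF ρ y1 y2 s x2) t)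
        = fun t : ℝ => A * Complex.exp (A * t + B * x2) := by
      funext t
      simp only [hF]
      exact expLin_deriv A (B * x2) t
    rw [this]
    have := ((expLin_hasDerivAt A (B * x2) x1).const_mul A).deriv
    rw [this]; ring
  have hd2 : deriv (fun t => deriv (fun s => selfDualF ρ y1 y2 x1 s) t) x2
      = B * B * Complex.exp (A * x1 + B * x2) := by
    have : (fun t : ℝ => deriv (fun s => selfDualF ρ y1 y2 x1 s) t)
        = fun t : ℝ => B * Complex.exp (B * t + A * x1) := by
      funext t
      have : (fun s : ℝ => selfDualF ρ y1 y2 x1 s) = fun s : ℝ => Complex.exp (B * s + A * x1) := by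
        funext s; rw [hF]; ring_nf
      rw [this]
      exact expLin_deriv B (A * x1) t
    rw [this]
    have := ((expLin_hasDerivAt B (A * x1) x2).const_mul B).deriv
    rw [this]
    rw [show B * x2 + A * x1 = A * x1 + B * x2 by ring]
    ring
  have hd3 : deriv (fun t => deriv (fun s => selfDualF ρ y1 y2 s t) x1) x2
      = A * B * Complex.exp (A * x1 + B * x2) := by
    have : (fun t : ℝ => deriv (fun s => selfDualF ρ y1 y2 s t) x1)
        = fun t : ℝ => A * Complex.exp (B * t + A * x1) := by
      funext t
      simp only [hF]
      rw [expLin_deriv A (B * t) x1]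
      rw [show B * t + A * x1 = A * x1 + B * t by ring]
    rw [this]
    have := ((expLin_hasDerivAt B (A * x1) x2).const_mul A).deriv
    rw [this]
    rw [show B * x2 + A * x1 = A * x1 + B * x2 by ring]
    ring
  rw [hd1, hd2, hd3, hF x1 x2]
  have h1 : ((Real.sqrt (1 - ρ) : ℝ) : ℂ) ^ 2 = 1 - (ρ : ℂ) := by
    norm_cast
    exact Real.sq_sqrt (by linarith [hρ.2])
  have h2 : ((Real.sqrt (1 + ρ) : ℝ) : ℂ) ^ 2 = 1 + (ρ : ℂ) := by
    norm_cast
    exact Real.sq_sqrt (by linarith [hρ.1])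
  have key : (1 / 2 : ℂ) * (A * A) + (1 / 2 : ℂ) * (B * B) + (ρ : ℂ) * (A * B)
      = 4 * (1 - (ρ : ℂ) ^ 2) * y1 * y2 := by
    rw [hA, hB]
    linear_combination ((1 : ℂ) + ρ) * ((y1 : ℂ) + y2) ^ 2 * h1
      + ((1 : ℂ) - ρ) * Complex.I ^ 2 * ((y1 : ℂ) - y2) ^ 2 * h2
      + ((1 : ℂ) - (ρ : ℂ) ^ 2) * ((y1 : ℂ) - y2) ^ 2 * Complex.I_sq
  linear_combination Complex.exp (A * x1 + B * x2) * key
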